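/- arXiv:2510.21595 — 3 statements merged into one kernel-verified Lean document; each statement's English description precedes it below -/
import Mathlib

section
/- Let A > 0 and let (θ_k) be a sequence in [0,1] indexed by k ≥ k₀ satisfying θ_{k₀} ≤ A/(2^{k₀})², and for all k ≥ k₀, θ_{k+1} ≤ (1/8)θ_k + (√A/(2·2^{k+1}))·√(θ_{k+1}). Then θ_k ≤ A/(2^k)² for all k ≥ k₀. -/
/-- Induction lemma for the one-arm upper bound: a sequence `θ` in `[0,1]`
satisfying the renormalisation recursion `θ_{k+1} ≤ θ_k/8 + (√A/(2·2^{k+1}))√θ_{k+1}`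
and the base bound `θ_{k₀} ≤ A/(2^{k₀})²` satisfies `θ_k ≤ A/(2^k)²` for all `k ≥ k₀`. -/
theorem stmt0 (A : ℝ) (hA : 0 < A) (θ : ℕ → ℝ) (k₀ : ℕ)
    (hrange : ∀ k, k₀ ≤ k → 0 ≤ θ k ∧ θ k ≤ 1)
    (hbase : θ k₀ ≤ A / ((2 : ℝ) ^ k₀) ^ 2)
    (hrec : ∀ k, k₀ ≤ k →
      θ (k + 1) ≤ (1 / 8) * θ k
        + (Real.sqrt A / (2 * (2 : ℝ) ^ (k + 1))) * Real.sqrt (θ (k + 1))) :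
    ∀ k, k₀ ≤ k → θ k ≤ A / ((2 : ℝ) ^ k) ^ 2 := by
  intro k hk
  induction k, hk using Nat.le_induction with
  | base => exact hbase
  | succ k hk ih =>
    have hθ1 : 0 ≤ θ (k + 1) := (hrange (k + 1) (le_trans hk (Nat.le_succ k))).1
    set x := Real.sqrt (θ (k + 1)) with hx
    have hxnn : 0 ≤ x := Real.sqrt_nonneg _
    have hxsq : x ^ 2 = θ (k + 1) := Real.sq_sqrt hθ1
    set t : ℝ := Real.sqrt A / 2 ^ (k + 1) with ht
    have h2pos : (0:ℝ) < 2 ^ (k + 1) := by positivity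
    have htnn : 0 ≤ t := by positivity
    have htsq : t ^ 2 = A / ((2 : ℝ) ^ (k + 1)) ^ 2 := by
      rw [ht, div_pow, Real.sq_sqrt hA.le]
    -- rewrite the recursion in terms of x and t
    have hrec' := hrec k hk
    have hkey : x ^ 2 ≤ t ^ 2 / 2 + (t / 2) * x := by
      rw [hxsq, htsq]
      have h1 : (1 / 8) * θ k ≤ A / ((2 : ℝ) ^ (k + 1)) ^ 2 / 2 := by
        have : θ k ≤ A / ((2 : ℝ) ^ k) ^ 2 := ih
        have hpk : ((2 : ℝ) ^ (k + 1)) ^ 2 = 4 * ((2:ℝ) ^ k) ^ 2 := by ring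
        rw [hpk]
        have hk2 : (0:ℝ) < ((2:ℝ) ^ k) ^ 2 := by positivity
        rw [div_div, le_div_iff₀ (by positivity)]
        rw [le_div_iff₀ (by positivity)] at this
        nlinarith
      have h2 : (Real.sqrt A / (2 * (2 : ℝ) ^ (k + 1))) * x = (t / 2) * x := by
        rw [ht]; ring
      calc θ (k + 1) ≤ (1 / 8) * θ k + (Real.sqrt A / (2 * (2 : ℝ) ^ (k + 1))) * x := hrec'
        _ ≤ A / ((2 : ℝ) ^ (k + 1)) ^ 2 / 2 + (t / 2) * x := by rw [h2]; linarith
    have hxt : x ≤ t := by nlinarith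
    calc θ (k + 1) = x ^ 2 := hxsq.symm
      _ ≤ t ^ 2 := by nlinarith
      _ = A / ((2 : ℝ) ^ (k + 1)) ^ 2 := htsq
end

section
/- For all p ∈ [0,1] and n ≥ 0, in spread-out Bernoulli percolation, φ_p(Λ_n) ≤ 2d·φ_p(H_n), where Λ_n = [-n,n]^d ∩ ℤ^d, H_n = ({-n,-n+1,...} × ℤ^{d-1}), and φ_p(S) := p Σ_{x∈S, y∉S, x~y} P_p[0 ↔ x inside S]. In particular, if φ_{p_c}(Λ_n) ≥ 1 for every n ≥ 1, then φ_{p_c}(H_n) ≥ 1/(2d). -/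
open MeasureTheory
open scoped ENNReal

/-- Spread-out adjacency: `x ~ y` iff `x ≠ y` and `|x - y|_∞ ≤ L`. -/
def adjSO (d L : ℕ) (x y : Fin d → ℤ) : Prop :=
  x ≠ y ∧ ∀ i, |x i - y i| ≤ (L : ℤ)

/-- `a` and `b` are connected by an open path inside `S` in the configuration `ω`. -/
def connIn (d L : ℕ) (S : Set (Fin d → ℤ)) (ω : Sym2 (Fin d → ℤ) → Bool)
    (a b : Fin d → ℤ) : Prop :=
  a ∈ S ∧ b ∈ S ∧
    Relation.ReflTransGen
      (fun u v => u ∈ S ∧ v ∈ S ∧ adjSO d L u v ∧ ω s(u, v) = true) a b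

/-- Restricted two-point function `τ^S(0,x)`. -/
noncomputable def tauSO (d L : ℕ) (μ : Measure (Sym2 (Fin d → ℤ) → Bool))
    (S : Set (Fin d → ℤ)) (x : Fin d → ℤ) : ℝ≥0∞ :=
  μ {ω | connIn d L S ω 0 x}

/-- `φ_p(S) = p Σ_{x ∈ S, y ∉ S, x ~ y} τ^S(0,x)`. -/
noncomputable def phiSO (d L : ℕ) (μ : Measure (Sym2 (Fin d → ℤ) → Bool)) (p : ℝ≥0∞)
    (S : Set (Fin d → ℤ)) : ℝ≥0∞ :=
  p * ∑' q : {q : (Fin d → ℤ) × (Fin d → ℤ) // q.1 ∈ S ∧ q.2 ∉ S ∧ adjSO d L q.1 q.2},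
      tauSO d L μ S q.val.1

/-- The box `Λ_n = [-n,n]^d ∩ ℤ^d`. -/
def boxSO (d : ℕ) (n : ℕ) : Set (Fin d → ℤ) := {x | ∀ i, |x i| ≤ (n : ℤ)}

/-- The translated half-space `H_n = {x : x₁ ≥ -n}`. -/
def halfSpaceSO (d : ℕ) (hd : 0 < d) (n : ℕ) : Set (Fin d → ℤ) :=
  {x | -(n : ℤ) ≤ x ⟨0, hd⟩}

/-- Signed permutations of the coordinates (lattice symmetries fixing the origin). -/
def IsSignedPerm (d : ℕ) (g : (Fin d → ℤ) → (Fin d → ℤ)) : Prop :=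
  ∃ (σ : Equiv.Perm (Fin d)) (ε : Fin d → ℤ),
    (∀ i, ε i = 1 ∨ ε i = -1) ∧ ∀ x i, g x i = ε i * x (σ i)

def gmapSO (d : ℕ) (hd : 0 < d) (k : Fin d × Bool) (x : Fin d → ℤ) : Fin d → ℤ :=
  fun j => (if k.2 then (1:ℤ) else -1) * x (Equiv.swap ⟨0, hd⟩ k.1 j)

lemma gmapSO_invol {d : ℕ} (hd : 0 < d) (k : Fin d × Bool) :
    Function.Involutive (gmapSO d hd k) := by
  intro x; funext j
  simp only [gmapSO, Equiv.swap_apply_self, ← mul_assoc]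
  rcases Bool.eq_false_or_eq_true k.2 with h | h <;> simp [h]

lemma gmapSO_signed {d : ℕ} (hd : 0 < d) (k : Fin d × Bool) :
    IsSignedPerm d (gmapSO d hd k) :=
  ⟨Equiv.swap ⟨0, hd⟩ k.1, fun _ => if k.2 then 1 else -1,
   fun _ => by rcases Bool.eq_false_or_eq_true k.2 with h | h <;> simp [h],
   fun x i => rfl⟩

lemma gmap_image_eq {d : ℕ} (hd : 0 < d) (k : Fin d × Bool) (S : Set (Fin d → ℤ)) :
    gmapSO d hd k '' S = {x | gmapSO d hd k x ∈ S} := by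
  ext x
  constructor
  · rintro ⟨a, ha, rfl⟩
    simpa [gmapSO_invol hd k a] using ha
  · intro hx
    exact ⟨gmapSO d hd k x, hx, gmapSO_invol hd k x⟩

lemma gmap_zero {d : ℕ} (hd : 0 < d) (k : Fin d × Bool) (x : Fin d → ℤ) :
    gmapSO d hd k x ⟨0, hd⟩ = (if k.2 then (1:ℤ) else -1) * x k.1 := by
  simp [gmapSO, Equiv.swap_apply_left]

lemma adj_gmap {d L : ℕ} (hd : 0 < d) (k : Fin d × Bool) {x y : Fin d → ℤ}
    (h : adjSO d L x y) : adjSO d L (gmapSO d hd k x) (gmapSO d hd k y) := by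
  refine ⟨fun e => h.1 ((gmapSO_invol hd k).injective e), fun j => ?_⟩
  have : gmapSO d hd k x j - gmapSO d hd k y j
      = (if k.2 then (1:ℤ) else -1) * (x (Equiv.swap ⟨0, hd⟩ k.1 j) - y (Equiv.swap ⟨0, hd⟩ k.1 j)) := by
    simp only [gmapSO]; ring
  rw [this, abs_mul]
  rcases Bool.eq_false_or_eq_true k.2 with hb | hb <;>
    simpa [hb] using h.2 (Equiv.swap ⟨0, hd⟩ k.1 j)

lemma exists_k {d : ℕ} (n : ℕ) {y : Fin d → ℤ} (hy : y ∉ boxSO d n) :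
    ∃ k : Fin d × Bool, (if k.2 then (1:ℤ) else -1) * y k.1 < -(n : ℤ) := by
  simp only [boxSO, Set.mem_setOf_eq, not_forall, not_le] at hy
  obtain ⟨i, hi⟩ := hy
  rcases lt_abs.mp hi with h | h
  · exact ⟨(i, false), by simp; linarith⟩
  · exact ⟨(i, true), by simp; linarith⟩

lemma box_sub_gmap {d : ℕ} (hd : 0 < d) (k : Fin d × Bool) (n : ℕ) :
    boxSO d n ⊆ gmapSO d hd k '' halfSpaceSO d hd n := by
  intro x hx
  rw [gmap_image_eq]
  show -(n : ℤ) ≤ gmapSO d hd k x ⟨0, hd⟩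
  rw [gmap_zero]
  have h := abs_le.mp (hx k.1)
  rcases Bool.eq_false_or_eq_true k.2 with hb | hb <;> simp [hb] <;> linarith [h.1, h.2]

lemma connIn_mono {d L : ℕ} {S S' : Set (Fin d → ℤ)} (hSS : S ⊆ S')
    (ω : Sym2 (Fin d → ℤ) → Bool) (a b : Fin d → ℤ) (h : connIn d L S ω a b) :
    connIn d L S' ω a b :=
  ⟨hSS h.1, hSS h.2.1,
    Relation.ReflTransGen.mono (fun u v hv => ⟨hSS hv.1, hSS hv.2.1, hv.2.2⟩) a b h.2.2⟩

/-- Lemma 2.1: by lattice symmetry, `φ_p(Λ_n) ≤ 2d φ_p(H_n)`; in particular, if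
`φ_{p_c}(Λ_n) ≥ 1` then `φ_{p_c}(H_n) ≥ 1/(2d)`. -/
theorem stmt12 (d L : ℕ) (hd : 0 < d) (hL : 1 ≤ L)
    (μ : Measure (Sym2 (Fin d → ℤ) → Bool)) [IsProbabilityMeasure μ]
    (p : ℝ≥0∞) (hp : p ≤ 1)
    (hsym : ∀ g : (Fin d → ℤ) → (Fin d → ℤ), IsSignedPerm d g →
      ∀ (S : Set (Fin d → ℤ)) (x : Fin d → ℤ),
        tauSO d L μ (g '' S) (g x) = tauSO d L μ S x) :
    (∀ n : ℕ, phiSO d L μ p (boxSO d n) ≤ 2 * (d : ℝ≥0∞) * phiSO d L μ p (halfSpaceSO d hd n)) ∧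
    (∀ n : ℕ, 1 ≤ n → 1 ≤ phiSO d L μ p (boxSO d n) →
      1 / (2 * (d : ℝ≥0∞)) ≤ phiSO d L μ p (halfSpaceSO d hd n)) := by
  have key : ∀ n : ℕ, phiSO d L μ p (boxSO d n)
      ≤ 2 * (d : ℝ≥0∞) * phiSO d L μ p (halfSpaceSO d hd n) := by
    intro n
    set H := halfSpaceSO d hd n with hHdef
    set Λ := boxSO d n with hΛdef
    let A := {q : (Fin d → ℤ) × (Fin d → ℤ) // q.1 ∈ Λ ∧ q.2 ∉ Λ ∧ adjSO d L q.1 q.2}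
    let B := {q : (Fin d → ℤ) × (Fin d → ℤ) // q.1 ∈ H ∧ q.2 ∉ H ∧ adjSO d L q.1 q.2}
    have hch : ∀ q : A, ∃ k : Fin d × Bool,
        (if k.2 then (1:ℤ) else -1) * q.1.2 k.1 < -(n : ℤ) :=
      fun q => exists_k n q.2.2.1
    let kf : A → Fin d × Bool := fun q => (hch q).choose
    have hmemB : ∀ q : A,
        gmapSO d hd (kf q) q.1.1 ∈ H ∧ gmapSO d hd (kf q) q.1.2 ∉ H ∧
          adjSO d L (gmapSO d hd (kf q) q.1.1) (gmapSO d hd (kf q) q.1.2) := by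
      intro q
      refine ⟨?_, ?_, adj_gmap hd (kf q) q.2.2.2⟩
      · have := box_sub_gmap hd (kf q) n q.2.1
        rwa [gmap_image_eq] at this
      · intro hmem
        have h1 : -(n : ℤ) ≤ gmapSO d hd (kf q) q.1.2 ⟨0, hd⟩ := hmem
        rw [gmap_zero] at h1
        exact absurd h1 (not_le.mpr (hch q).choose_spec)
    let F : A → (Fin d × Bool) × B := fun q =>
      ⟨kf q, ⟨(gmapSO d hd (kf q) q.1.1, gmapSO d hd (kf q) q.1.2), hmemB q⟩⟩
    have Finj : Function.Injective F := by
      intro q q' h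
      have hk : kf q = kf q' := congrArg Prod.fst h
      have h2 : (gmapSO d hd (kf q) q.1.1, gmapSO d hd (kf q) q.1.2)
          = (gmapSO d hd (kf q') q'.1.1, gmapSO d hd (kf q') q'.1.2) :=
        congrArg (fun r => (r.2 : B).1) h
      rw [hk] at h2
      have hx := (gmapSO_invol hd (kf q')).injective (congrArg Prod.fst h2)
      have hy := (gmapSO_invol hd (kf q')).injective (congrArg Prod.snd h2)
      exact Subtype.ext (Prod.ext hx hy)
    have hτ : ∀ q : A, tauSO d L μ Λ q.1.1 ≤ tauSO d L μ H ((F q).2.1.1) := by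
      intro q
      have h1 : tauSO d L μ Λ q.1.1 ≤ tauSO d L μ (gmapSO d hd (kf q) '' H) q.1.1 :=
        measure_mono fun ω hω => connIn_mono (box_sub_gmap hd (kf q) n) ω 0 q.1.1 hω
      have h2 : tauSO d L μ (gmapSO d hd (kf q) '' H) q.1.1
          = tauSO d L μ H (gmapSO d hd (kf q) q.1.1) := by
        have := hsym _ (gmapSO_signed hd (kf q)) H (gmapSO d hd (kf q) q.1.1)
        rwa [gmapSO_invol hd (kf q) q.1.1] at this
      exact h1.trans_eq h2
    have hcount : ∑' r : (Fin d × Bool) × B, tauSO d L μ H r.2.1.1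
        = 2 * (d : ℝ≥0∞) * ∑' b : B, tauSO d L μ H b.1.1 := by
      rw [ENNReal.tsum_prod (f := fun (_ : Fin d × Bool) (b : B) => tauSO d L μ H b.1.1), tsum_fintype, Finset.sum_const, Finset.card_univ,
        Fintype.card_prod, Fintype.card_fin, Fintype.card_bool, nsmul_eq_mul]
      push_cast
      ring
    calc phiSO d L μ p Λ = p * ∑' q : A, tauSO d L μ Λ q.1.1 := rfl
      _ ≤ p * ∑' q : A, tauSO d L μ H ((F q).2.1.1) :=
          mul_le_mul_right (ENNReal.tsum_le_tsum hτ) p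
      _ ≤ p * ∑' r : (Fin d × Bool) × B, tauSO d L μ H r.2.1.1 :=
          mul_le_mul_right
            (ENNReal.tsum_comp_le_tsum_of_injective Finj fun r => tauSO d L μ H r.2.1.1) p
      _ = 2 * (d : ℝ≥0∞) * (p * ∑' b : B, tauSO d L μ H b.1.1) := by rw [hcount]; ring
      _ = 2 * (d : ℝ≥0∞) * phiSO d L μ p H := rfl
  refine ⟨key, fun n hn h1 => ?_⟩
  have h2 : 1 ≤ phiSO d L μ p (halfSpaceSO d hd n) * (2 * (d : ℝ≥0∞)) := by
    calc (1 : ℝ≥0∞) ≤ phiSO d L μ p (boxSO d n) := h1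
      _ ≤ 2 * (d : ℝ≥0∞) * phiSO d L μ p (halfSpaceSO d hd n) := key n
      _ = phiSO d L μ p (halfSpaceSO d hd n) * (2 * (d : ℝ≥0∞)) := mul_comm _ _
  exact ENNReal.div_le_of_le_mul h2
end

section
/- Let g : ℕ → [0,1] be non-increasing and suppose there exist K₂ > 0 such that for every n ≥ 2L (some fixed L ≥ 1): g(n) ≤ (1/16)·g(⌊n/2⌋) + K₂·n^{-3/2}·√(g(n)). Then there exists a constant A' > 0 (depending on K₂ and L) such that g(n) ≤ A'·n^{-3} for all n ≥ 1. -/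
set_option maxHeartbeats 1000000 in
/-- Half-space induction: if `g : ℕ → [0,1]` is non-increasing and satisfies
`g(n) ≤ (1/16) g(⌊n/2⌋) + K₂ n^{-3/2} √(g(n))` for all `n ≥ 2L`, then
`g(n) ≤ A' n^{-3}` for some constant `A' > 0` and all `n ≥ 1`. -/
theorem stmt17 (g : ℕ → ℝ) (K₂ : ℝ) (L : ℕ) (hK₂ : 0 < K₂) (hL : 1 ≤ L)
    (hrange : ∀ n, 0 ≤ g n ∧ g n ≤ 1)
    (hmono : ∀ m n : ℕ, m ≤ n → g n ≤ g m)
    (hrec : ∀ n : ℕ, 2 * L ≤ n →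
      g n ≤ (1 / 16) * g (n / 2) + K₂ * (n : ℝ) ^ (-(3 / 2 : ℝ)) * Real.sqrt (g n)) :
    ∃ A' > 0, ∀ n : ℕ, 1 ≤ n → g n ≤ A' / (n : ℝ) ^ 3 := by
  set M : ℕ := max 8 (2 * L) with hM
  set A : ℝ := (M : ℝ) ^ 3 + 16 * K₂ ^ 2 with hA
  have hMpos : 0 < (M : ℝ) := by positivity
  have hApos : 0 < A := by positivity
  refine ⟨A, hApos, ?_⟩
  intro n
  induction n using Nat.strong_induction_on with
  | _ n ih =>
    intro hn
    have hnpos : (0 : ℝ) < n := by exact_mod_cast hn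
    by_cases hcase : n < M
    · -- base case: g n ≤ 1 ≤ A / n³
      have h1 : g n ≤ 1 := (hrange n).2
      have hnM : (n : ℝ) ≤ (M : ℝ) := by exact_mod_cast hcase.le
      have hcube : (n : ℝ) ^ 3 ≤ A := by
        nlinarith [pow_le_pow_left₀ hnpos.le hnM 3, sq_nonneg K₂]
      rw [le_div_iff₀ (by positivity)]
      nlinarith [pow_pos hnpos 3]
    · push_neg at hcase
      have h8 : (8 : ℕ) ≤ n := le_trans (le_max_left _ _) hcase
      have h2L : 2 * L ≤ n := le_trans (le_max_right _ _) hcase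
      have hn8 : (8 : ℝ) ≤ (n : ℝ) := by exact_mod_cast h8
      set m : ℕ := n / 2 with hm
      have hm1 : 1 ≤ m := by omega
      have hmlt : m < n := by omega
      have ihm : g m ≤ A / (m : ℝ) ^ 3 := ih m hmlt hm1
      have hmR : (n : ℝ) ≤ 2 * (m : ℝ) + 1 := by
        have : n ≤ 2 * m + 1 := by omega
        exact_mod_cast this
      have hmpos : (0 : ℝ) < (m : ℝ) := by exact_mod_cast hm1
      -- n³ ≤ 12 m³  (since 2m+1 ≥ n and n ≥ 8)
      have hcube : (n : ℝ) ^ 3 ≤ 12 * (m : ℝ) ^ 3 := by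
        nlinarith [sq_nonneg ((n:ℝ) - 8), sq_nonneg ((m:ℝ)), sq_nonneg ((n:ℝ) - 2*(m:ℝ))]
      have hgm : g m ≤ 12 * A / (n : ℝ) ^ 3 := by
        rw [le_div_iff₀ (by positivity)] at ihm
        rw [le_div_iff₀ (by positivity)]
        have hgm0 := (hrange m).1
        nlinarith
      -- rpow computation
      have htpos0 : 0 < (n : ℝ) ^ (-(3 / 2 : ℝ)) := Real.rpow_pos_of_pos hnpos _
      have ht20 : ((n : ℝ) ^ (-(3 / 2 : ℝ))) ^ 2 = ((n : ℝ) ^ 3)⁻¹ := by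
        rw [← Real.rpow_natCast ((n:ℝ) ^ (-(3/2:ℝ))) 2, ← Real.rpow_mul hnpos.le]
        norm_num
      have hrecn := hrec n h2L
      rw [show n / 2 = m from rfl] at hrecn
      generalize hT : (n : ℝ) ^ (-(3 / 2 : ℝ)) = t at htpos0 ht20 hrecn
      -- AM-GM: K₂ t √(g n) ≤ (1/8) g n + 2 K₂² t²
      have hsq : Real.sqrt (g n) ^ 2 = g n := Real.sq_sqrt (hrange n).1
      have hamgm : K₂ * t * Real.sqrt (g n) ≤ (1/8) * g n + 2 * K₂^2 * t^2 := by
        nlinarith [sq_nonneg (Real.sqrt (g n) - 4 * (K₂ * t)), Real.sqrt_nonneg (g n)]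
      have hKA : 2 * K₂ ^ 2 ≤ A / 8 := by
        have : (0:ℝ) ≤ (M:ℝ)^3 := by positivity
        nlinarith
      have key : (7/8) * g n ≤ (7/8) * (A / (n:ℝ)^3) := by
        have hid : 12 * A / (n:ℝ)^3 = 12 * (A / (n:ℝ)^3) := by ring
        rw [hid] at hgm
        have e1 : (1/16) * g m ≤ (3/4) * (A / (n:ℝ)^3) := by linarith
        have e2 : 2 * K₂^2 * t^2 ≤ (1/8) * (A / (n:ℝ)^3) := by
          rw [ht20, div_eq_mul_inv A]
          have hinv : (0:ℝ) ≤ ((n:ℝ)^3)⁻¹ := by positivity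
          nlinarith [mul_le_mul_of_nonneg_right hKA hinv]
        have : g n ≤ (1/16) * g m + K₂ * t * Real.sqrt (g n) := hrecn
        linarith
      linarith
end
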